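/- Let n ≥ 1 and r₁, …, rₙ > 0, set ρ := max_j max(1, 1/r_j), let k ≥ 0, and let f : ℝⁿ × ℝ × ℝ → ℝⁿ satisfy ‖f(x̌, η̌, ε̌) − f(x, η, ε)‖_∞ ≤ k(‖x̌ − x‖_∞ + |η̌ − η| + |ε̌ − ε|) for all arguments. Let ε ≥ 0, a ∈ ℝⁿ, and let b, b̌ ∈ ℝⁿ, η, η̌ ∈ ℝ, and let x, x̌ : [0, 2π] → ℝⁿ be continuous functions satisfying, for each component j and all θ ∈ [0, 2π], x_j(θ) = a_j cos(r_jθ) + (b_j/r_j) sin(r_jθ) − (ε/r_j) ∫₀^θ sin(r_j(θ − s)) f_j(x(s), η, ε) ds, and the same equations for x̌ with (b̌, η̌) in place of (b, η). If 2πρεk < 1, then sup_{θ ∈ [0, 2π]} ‖x̌(θ) − x(θ)‖_∞ ≤ ρ(‖b̌ − b‖_∞ + 2πεk |η̌ − η|) / (1 − 2πρεk). -/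

import Mathlib

open Real

/-- System version of the Lipschitz-dependence lemma: solutions of the modal integral
equations `x_j(θ) = a_j cos(r_jθ) + (b_j/r_j) sin(r_jθ) − (ε/r_j) ∫₀^θ sin(r_j(θ−s)) f_j(x(s),η,ε) ds`
depend Lipschitz-continuously on `y = (η, b)` (sup norm `‖·‖` on `ℝⁿ`). -/
theorem stmt_17 (n : ℕ) (hn : 1 ≤ n) (r : Fin n → ℝ) (hr : ∀ j, 0 < r j)
    (ρ : ℝ) (hρ : ρ = ⨆ j, max 1 (1 / r j))
    (k : ℝ) (hk : 0 ≤ k)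
    (f : (Fin n → ℝ) → ℝ → ℝ → (Fin n → ℝ))
    (hf : ∀ (x x' : Fin n → ℝ) (η η' ε ε' : ℝ),
      ‖f x' η' ε' - f x η ε‖ ≤ k * (‖x' - x‖ + |η' - η| + |ε' - ε|))
    (ε : ℝ) (hε : 0 ≤ ε) (a b b' : Fin n → ℝ) (η η' : ℝ)
    (x x' : ℝ → Fin n → ℝ)
    (hxc : ContinuousOn x (Set.Icc 0 (2 * π)))
    (hx'c : ContinuousOn x' (Set.Icc 0 (2 * π)))
    (hx : ∀ j : Fin n, ∀ θ ∈ Set.Icc (0:ℝ) (2 * π),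
      x θ j = a j * Real.cos (r j * θ) + (b j / r j) * Real.sin (r j * θ)
        - (ε / r j) * ∫ s in (0:ℝ)..θ, Real.sin (r j * (θ - s)) * f (x s) η ε j)
    (hx' : ∀ j : Fin n, ∀ θ ∈ Set.Icc (0:ℝ) (2 * π),
      x' θ j = a j * Real.cos (r j * θ) + (b' j / r j) * Real.sin (r j * θ)
        - (ε / r j) * ∫ s in (0:ℝ)..θ, Real.sin (r j * (θ - s)) * f (x' s) η' ε j)
    (hsmall : 2 * π * ρ * ε * k < 1) :
    ∀ θ ∈ Set.Icc (0:ℝ) (2 * π),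
      ‖x' θ - x θ‖ ≤ ρ * (‖b' - b‖ + 2 * π * ε * k * |η' - η|) / (1 - 2 * π * ρ * ε * k) := by
  have hπ : (0:ℝ) < π := Real.pi_pos
  have h2π : (0:ℝ) ≤ 2 * π := by positivity
  haveI : Nonempty (Fin n) := ⟨⟨0, hn⟩⟩
  have hbdd : BddAbove (Set.range fun j : Fin n => max 1 (1 / r j)) :=
    Set.Finite.bddAbove (Set.finite_range _)
  have hρ1 : (1:ℝ) ≤ ρ := by
    rw [hρ]; exact le_trans (le_max_left _ _) (le_ciSup hbdd ⟨0, hn⟩)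
  have hρr : ∀ j, 1 / r j ≤ ρ := fun j => by
    rw [hρ]; exact le_trans (le_max_right _ _) (le_ciSup hbdd j)
  have hρ0 : (0:ℝ) < ρ := lt_of_lt_of_le one_pos hρ1
  -- max of the difference
  obtain ⟨θ₀, hθ₀, hmax⟩ := isCompact_Icc.exists_isMaxOn (Set.nonempty_Icc.mpr h2π)
    ((hx'c.sub hxc).norm)
  set M := ‖x' θ₀ - x θ₀‖ with hMdef
  have hM0 : 0 ≤ M := norm_nonneg _
  -- Lipschitz continuity of f in x
  have hfl : ∀ ηη, LipschitzWith ⟨k, hk⟩ (fun v => f v ηη ε) := by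
    intro ηη
    apply LipschitzWith.of_dist_le_mul
    intro v w
    rw [dist_eq_norm, dist_eq_norm]
    have := hf w v ηη ηη ε ε
    exact (by simpa using this : ‖f v ηη ε - f w ηη ε‖ ≤ k * ‖v - w‖)
  -- key pointwise bound
  have key : ∀ θ ∈ Set.Icc (0:ℝ) (2 * π),
      ‖x' θ - x θ‖ ≤ ρ * ‖b' - b‖ + 2 * π * ρ * ε * k * (M + |η' - η|) := by
    intro θ hθ
    have hC : (0:ℝ) ≤ ρ * ‖b' - b‖ + 2 * π * ρ * ε * k * (M + |η' - η|) := by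
      have h1 : (0:ℝ) ≤ ρ * ‖b' - b‖ := mul_nonneg hρ0.le (norm_nonneg _)
      have h2 : (0:ℝ) ≤ 2 * π * ρ * ε * k :=
        mul_nonneg (mul_nonneg (mul_nonneg h2π hρ0.le) hε) hk
      have h3 : (0:ℝ) ≤ M + |η' - η| := add_nonneg hM0 (abs_nonneg _)
      nlinarith
    rw [pi_norm_le_iff_of_nonneg hC]
    intro j
    have hsub : Set.uIcc (0:ℝ) θ ⊆ Set.Icc 0 (2 * π) := by
      rw [Set.uIcc_of_le hθ.1]; exact Set.Icc_subset_Icc le_rfl hθ.2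
    have hint : ∀ (g : ℝ → Fin n → ℝ), ContinuousOn g (Set.Icc 0 (2 * π)) → ∀ ηη : ℝ,
        IntervalIntegrable (fun s => Real.sin (r j * (θ - s)) * f (g s) ηη ε j)
          MeasureTheory.volume 0 θ := by
      intro g hg ηη
      apply ContinuousOn.intervalIntegrable
      apply ContinuousOn.mul
      · exact (Real.continuous_sin.comp
          (continuous_const.mul (continuous_const.sub continuous_id))).continuousOn
      · exact ((continuous_apply j).comp (hfl ηη).continuous).comp_continuousOn (hg.mono hsub)
    have hI : (∫ s in (0:ℝ)..θ, Real.sin (r j * (θ - s)) * f (x' s) η' ε j)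
        - (∫ s in (0:ℝ)..θ, Real.sin (r j * (θ - s)) * f (x s) η ε j)
        = ∫ s in (0:ℝ)..θ,
            Real.sin (r j * (θ - s)) * (f (x' s) η' ε j - f (x s) η ε j) := by
      rw [← intervalIntegral.integral_sub (hint x' hx'c η') (hint x hxc η)]
      congr 1; ext s; ring
    have hdiff : x' θ j - x θ j = ((b' j - b j) / r j) * Real.sin (r j * θ)
        - (ε / r j) * ∫ s in (0:ℝ)..θ,
            Real.sin (r j * (θ - s)) * (f (x' s) η' ε j - f (x s) η ε j) := by
      rw [hx j θ hθ, hx' j θ hθ, ← hI]; ring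
    -- bound the integral
    have hJ : ‖∫ s in (0:ℝ)..θ,
        Real.sin (r j * (θ - s)) * (f (x' s) η' ε j - f (x s) η ε j)‖
        ≤ k * (M + |η' - η|) * |θ - 0| := by
      apply intervalIntegral.norm_integral_le_of_norm_le_const
      intro s hs
      rw [Set.uIoc_of_le hθ.1] at hs
      have hsI : s ∈ Set.Icc (0:ℝ) (2 * π) := ⟨hs.1.le, hs.2.trans hθ.2⟩
      have hb1 : |f (x' s) η' ε j - f (x s) η ε j| ≤ ‖f (x' s) η' ε - f (x s) η ε‖ := by
        have := norm_le_pi_norm (f (x' s) η' ε - f (x s) η ε) j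
        simpa [Real.norm_eq_abs] using this
      have hb2 : ‖f (x' s) η' ε - f (x s) η ε‖ ≤ k * (‖x' s - x s‖ + |η' - η| + |ε - ε|) :=
        hf (x s) (x' s) η η' ε ε
      have hb3 : ‖x' s - x s‖ ≤ M := hmax hsI
      have hb4 : |Real.sin (r j * (θ - s))| ≤ 1 := Real.abs_sin_le_one _
      rw [Real.norm_eq_abs, abs_mul]
      calc |Real.sin (r j * (θ - s))| * |f (x' s) η' ε j - f (x s) η ε j|
          ≤ 1 * (k * (M + |η' - η|)) := by
            apply mul_le_mul hb4 _ (abs_nonneg _) one_pos.le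
            have : |ε - ε| = 0 := by simp
            calc |f (x' s) η' ε j - f (x s) η ε j|
                ≤ k * (‖x' s - x s‖ + |η' - η| + |ε - ε|) := hb1.trans hb2
              _ ≤ k * (M + |η' - η|) := by
                  rw [this]
                  apply mul_le_mul_of_nonneg_left _ hk
                  linarith
        _ = k * (M + |η' - η|) := one_mul _
    have hθle : |θ - 0| ≤ 2 * π := by
      rw [sub_zero, abs_of_nonneg hθ.1]; exact hθ.2
    have hbj : |b' j - b j| ≤ ‖b' - b‖ := by
      have := norm_le_pi_norm (b' - b) j
      simpa [Real.norm_eq_abs] using this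
    have hrρ : (r j)⁻¹ ≤ ρ := by
      have := hρr j; rwa [one_div] at this
    have hrinv : (0:ℝ) ≤ (r j)⁻¹ := inv_nonneg.mpr (hr j).le
    have hkM : (0:ℝ) ≤ k * (M + |η' - η|) :=
      mul_nonneg hk (add_nonneg hM0 (abs_nonneg _))
    rw [show (x' θ - x θ) j = x' θ j - x θ j from rfl, Real.norm_eq_abs, hdiff]
    calc |((b' j - b j) / r j) * Real.sin (r j * θ)
          - (ε / r j) * ∫ s in (0:ℝ)..θ,
              Real.sin (r j * (θ - s)) * (f (x' s) η' ε j - f (x s) η ε j)|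
        ≤ |((b' j - b j) / r j) * Real.sin (r j * θ)|
          + |(ε / r j) * ∫ s in (0:ℝ)..θ,
              Real.sin (r j * (θ - s)) * (f (x' s) η' ε j - f (x s) η ε j)| :=
          abs_sub _ _
      _ ≤ ρ * ‖b' - b‖ + 2 * π * ρ * ε * k * (M + |η' - η|) := by
          have t1 : |((b' j - b j) / r j) * Real.sin (r j * θ)| ≤ ρ * ‖b' - b‖ := by
            rw [abs_mul, abs_div, abs_of_pos (hr j), div_eq_mul_inv]
            calc |b' j - b j| * (r j)⁻¹ * |Real.sin (r j * θ)|
                ≤ |b' j - b j| * (r j)⁻¹ * 1 := by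
                  apply mul_le_mul_of_nonneg_left (Real.abs_sin_le_one _)
                  exact mul_nonneg (abs_nonneg _) hrinv
              _ = |b' j - b j| * (r j)⁻¹ := mul_one _
              _ ≤ ‖b' - b‖ * ρ := by
                  apply mul_le_mul hbj hrρ hrinv (norm_nonneg _)
              _ = ρ * ‖b' - b‖ := mul_comm _ _
          have t2 : |(ε / r j) * ∫ s in (0:ℝ)..θ,
              Real.sin (r j * (θ - s)) * (f (x' s) η' ε j - f (x s) η ε j)|
              ≤ 2 * π * ρ * ε * k * (M + |η' - η|) := by
            rw [abs_mul, abs_div, abs_of_nonneg hε, abs_of_pos (hr j), div_eq_mul_inv]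
            have hJ' : |∫ s in (0:ℝ)..θ,
                Real.sin (r j * (θ - s)) * (f (x' s) η' ε j - f (x s) η ε j)|
                ≤ k * (M + |η' - η|) * (2 * π) := by
              refine le_trans ?_ (mul_le_mul_of_nonneg_left hθle hkM)
              simpa [Real.norm_eq_abs] using hJ
            calc ε * (r j)⁻¹ * |∫ s in (0:ℝ)..θ,
                Real.sin (r j * (θ - s)) * (f (x' s) η' ε j - f (x s) η ε j)|
                ≤ ε * ρ * (k * (M + |η' - η|) * (2 * π)) := by
                  apply mul_le_mul _ hJ' (abs_nonneg _) (mul_nonneg hε hρ0.le)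
                  exact mul_le_mul_of_nonneg_left hrρ hε
              _ = 2 * π * ρ * ε * k * (M + |η' - η|) := by ring
          linarith
  -- solve for M
  have hMB : M ≤ ρ * ‖b' - b‖ + 2 * π * ρ * ε * k * (M + |η' - η|) := key θ₀ hθ₀
  have hD : (0:ℝ) < 1 - 2 * π * ρ * ε * k := by linarith
  intro θ hθ
  have h1 : ‖x' θ - x θ‖ ≤ M := hmax hθ
  rw [le_div_iff₀ hD]
  nlinarith [mul_le_mul_of_nonneg_right h1 hD.le, hMB]
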